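/- A symmetric m×m real matrix is positive definite if and only if all of its leading principal minors are positive. -/

import Mathlib

open Matrix

lemma posDef_of_posSemidef_det_ne_zero {n : Type*} [Fintype n] [DecidableEq n]
    {M : Matrix n n ℝ} (h : M.PosSemidef) (hd : M.det ≠ 0) : M.PosDef := by
  refine Matrix.PosDef.of_dotProduct_mulVec_pos h.1 fun x hx => ?_
  rcases (h.dotProduct_mulVec_nonneg x).lt_or_eq with hlt | heq
  · exact hlt
  · exfalso
    have h0 : M *ᵥ x = 0 := (h.dotProduct_mulVec_zero_iff x).mp heq.symm
    exact hx (Matrix.eq_zero_of_mulVec_eq_zero hd h0)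

lemma posDef_submatrix_of_injective {n k : Type*} [Fintype n] [Fintype k] [DecidableEq n]
    {M : Matrix n n ℝ} (hM : M.PosDef) {f : k → n} (hf : Function.Injective f) :
    (M.submatrix f f).PosDef := by
  refine Matrix.PosDef.of_dotProduct_mulVec_pos (hM.1.submatrix f) fun x hx => ?_
  classical
  set y : n → ℝ := Function.extend f x (0 : n → ℝ) with hy
  have hyx : ∀ i, y (f i) = x i := fun i => hf.extend_apply x 0 i
  have hy0' : ∀ a, (∀ i, f i ≠ a) → y a = 0 := by
    intro a ha
    rw [hy, Function.extend_apply' x (0 : n → ℝ) a (fun ⟨i, hi⟩ => ha i hi)]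
    rfl
  have hy0 : y ≠ 0 := fun h => hx (funext fun i => by
    have := congrFun h (f i); rw [hyx i] at this; exact this)
  have hsum : ∀ g : n → ℝ, (∀ a, (∀ i, f i ≠ a) → g a = 0) → ∑ a, g a = ∑ i, g (f i) := by
    intro g hg
    rw [← Finset.sum_image (f := g) (g := f) (fun i _ j _ h => hf h)]
    exact (Finset.sum_subset (Finset.subset_univ _) (fun a _ ha =>
      hg a (fun i hi => ha (Finset.mem_image.mpr ⟨i, Finset.mem_univ i, hi⟩)))).symm
  have hmv : ∀ i, (M *ᵥ y) (f i) = ((M.submatrix f f) *ᵥ x) i := by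
    intro i
    show ∑ b, M (f i) b * y b = ∑ j, M (f i) (f j) * x j
    rw [hsum (fun b => M (f i) b * y b) (fun a ha => by simp [hy0' a ha])]
    exact Finset.sum_congr rfl fun j _ => by rw [hyx]
  have key : star y ⬝ᵥ M *ᵥ y = star x ⬝ᵥ (M.submatrix f f) *ᵥ x := by
    show ∑ a, star (y a) * (M *ᵥ y) a = ∑ i, star (x i) * ((M.submatrix f f) *ᵥ x) i
    rw [hsum (fun a => star (y a) * (M *ᵥ y) a) (fun a ha => by simp [hy0' a ha])]
    exact Finset.sum_congr rfl fun i _ => by rw [hyx, hmv]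
  rw [← key]
  exact hM.dotProduct_mulVec_pos hy0

lemma sylvester_aux : ∀ (m : ℕ) (A : Matrix (Fin m) (Fin m) ℝ), Aᵀ = A →
    (∀ (k : ℕ) (hk : k ≤ m), 0 < (A.submatrix (Fin.castLE hk) (Fin.castLE hk)).det) →
    A.PosDef := by
  intro m
  induction m with
  | zero =>
    intro A _ _
    refine Matrix.PosDef.of_dotProduct_mulVec_pos ?_ fun x hx => absurd (funext fun i => i.elim0) hx
    ext i; exact i.elim0
  | succ n ih =>
    intro A hsym hmin
    -- the leading n×n block
    set B : Matrix (Fin n) (Fin n) ℝ :=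
      A.submatrix (Fin.castLE (Nat.le_succ n)) (Fin.castLE (Nat.le_succ n)) with hBdef
    have hBsym : Bᵀ = B := by
      ext i j
      simpa [hBdef] using congrFun (congrFun hsym _) _
    have hBpd : B.PosDef := by
      refine ih B hBsym fun k hk => ?_
      have : B.submatrix (Fin.castLE hk) (Fin.castLE hk) =
          A.submatrix (Fin.castLE (hk.trans (Nat.le_succ n)))
            (Fin.castLE (hk.trans (Nat.le_succ n))) := by
        rw [hBdef, Matrix.submatrix_submatrix]
        rfl
      rw [this]
      exact hmin k _
    have hdetB : 0 < B.det := hBpd.det_pos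
    have hdetA : 0 < A.det := by
      have := hmin (n + 1) le_rfl
      simpa using this
    -- block decomposition via the equivalence Fin n ⊕ Fin 1 ≃ Fin (n+1)
    set e : Fin n ⊕ Fin 1 ≃ Fin (n + 1) := finSumFinEquiv with he
    set C : Matrix (Fin n ⊕ Fin 1) (Fin n ⊕ Fin 1) ℝ := A.submatrix e e with hCdef
    have hdetC : C.det = A.det := Matrix.det_submatrix_equiv_self e A
    have hC11 : C.toBlocks₁₁ = B := by
      ext i j
      show A (e (Sum.inl i)) (e (Sum.inl j)) = _
      rw [he]
      simp only [finSumFinEquiv_apply_left]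
      congr 1 <;> exact Fin.ext rfl
    have hCsym : Cᵀ = C := by
      ext a b
      exact congrFun (congrFun hsym _) _
    have hC21 : C.toBlocks₂₁ = (C.toBlocks₁₂)ᴴ := by
      ext i j
      show C (Sum.inr i) (Sum.inl j) = star (C (Sum.inl j) (Sum.inr i))
      rw [star_trivial]
      exact (congrFun (congrFun hCsym _) _).symm
    have hCblocks : C = fromBlocks B C.toBlocks₁₂ (C.toBlocks₁₂)ᴴ C.toBlocks₂₂ := by
      rw [← hC11, ← hC21]
      exact (Matrix.fromBlocks_toBlocks C).symm
    haveI : Invertible B := B.invertibleOfIsUnitDet hdetB.ne'.isUnit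
    set S : Matrix (Fin 1) (Fin 1) ℝ :=
      C.toBlocks₂₂ - (C.toBlocks₁₂)ᴴ * B⁻¹ * C.toBlocks₁₂ with hSdef
    have hdetS : 0 < S.det := by
      have hd : C.det = B.det * S.det := by
        rw [hCblocks, Matrix.det_fromBlocks₁₁, invOf_eq_nonsing_inv]
      have : S.det = C.det / B.det := by
        field_simp [hd]
        rw [hd]; ring
      rw [this, hdetC]
      positivity
    have hSpd : S.PosDef := by
      have hS : S = Matrix.diagonal (fun _ : Fin 1 => S 0 0) := by
        ext i j
        fin_cases i <;> fin_cases j <;> simp [Matrix.diagonal]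
      rw [hS]
      rw [Matrix.posDef_diagonal_iff]
      intro i
      have := hdetS
      rwa [Matrix.det_fin_one] at this
    have hCpsd : C.PosSemidef := by
      rw [hCblocks]
      exact (Matrix.PosDef.fromBlocks₁₁ _ _ hBpd).mpr (hSdef ▸ hSpd.posSemidef)
    have hCpd : C.PosDef := posDef_of_posSemidef_det_ne_zero hCpsd (by rw [hdetC]; exact hdetA.ne')
    have : (C.submatrix e.symm e.symm).PosDef :=
      posDef_submatrix_of_injective hCpd e.symm.injective
    rwa [hCdef, Matrix.submatrix_submatrix, Equiv.self_comp_symm, Matrix.submatrix_id_id] at this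

/-- Sylvester's criterion: a symmetric `m×m` real matrix is positive definite iff
all of its leading principal minors are positive. -/
theorem posDef_iff_leading_principal_minors (m : ℕ)
    (A : Matrix (Fin m) (Fin m) ℝ) (hsym : Aᵀ = A) :
    A.PosDef ↔
      ∀ (k : ℕ) (hk : k ≤ m), 1 ≤ k →
        0 < (Matrix.of fun i j : Fin k => A (Fin.castLE hk i) (Fin.castLE hk j)).det := by
  constructor
  · intro hA k hk _
    have : (A.submatrix (Fin.castLE hk) (Fin.castLE hk)).PosDef :=
      posDef_submatrix_of_injective hA (Fin.castLE_injective hk)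
    exact this.det_pos
  · intro h
    refine sylvester_aux m A hsym fun k hk => ?_
    rcases Nat.eq_zero_or_pos k with rfl | hk1
    · simp [Matrix.det_isEmpty]
    · exact h k hk hk1
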